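/- arXiv:1603.05969 — 4 statements merged into one kernel-verified Lean document; each statement's English description precedes it below -/
import Mathlib

section
/- Let W be a finite real reflection group with set of reflections T, let (t_1,…,t_m) be a tuple of reflections, and let 1 ≤ i_1 < i_2 < ⋯ < i_k ≤ m. Then there exist reflections t'_{k+1},…,t'_m such that the tuple (t_{i_1},…,t_{i_k}, t'_{k+1},…,t'_m) lies in the Hurwitz orbit of (t_1,…,t_m); in particular every subsequence of a tuple of reflections occurs as a prefix of some tuple in its Hurwitz orbit. -/
open scoped RealInnerProductSpace

variable {V : Type*} [NormedAddCommGroup V] [InnerProductSpace ℝ V] [FiniteDimensional ℝ V]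

/-- The orthogonal reflection in the hyperplane `α^⊥`. -/
noncomputable def reflAlong (α : V) : V ≃ₗᵢ[ℝ] V :=
  Submodule.reflection ((Submodule.span ℝ {α})ᗮ)

/-- An orthogonal reflection: the reflection through the hyperplane orthogonal to some
nonzero vector. -/
def IsReflection (g : V ≃ₗᵢ[ℝ] V) : Prop :=
  ∃ α : V, α ≠ 0 ∧ g = reflAlong α

/-- A finite real reflection group: a finite subgroup of the orthogonal group generated by its
reflections and fixing no nonzero vector. -/
def IsReflectionGroup (W : Subgroup (V ≃ₗᵢ[ℝ] V)) : Prop :=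
  (W : Set (V ≃ₗᵢ[ℝ] V)).Finite ∧
    Subgroup.closure {g | g ∈ W ∧ IsReflection g} = W ∧
    ∀ v : V, (∀ g ∈ W, g v = v) → v = 0
/-- A single Hurwitz move `σ_i` on tuples in a group. -/
def HurwitzMove {G : Type*} [Group G] {m : ℕ} (t t' : Fin m → G) : Prop :=
  ∃ (i : Fin m) (h : (i : ℕ) + 1 < m),
    t' i = t ⟨(i : ℕ) + 1, h⟩ ∧
      t' ⟨(i : ℕ) + 1, h⟩ = (t ⟨(i : ℕ) + 1, h⟩)⁻¹ * t i * t ⟨(i : ℕ) + 1, h⟩ ∧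
      ∀ j : Fin m, j ≠ i → j ≠ ⟨(i : ℕ) + 1, h⟩ → t' j = t j

/-- Two tuples lie in the same Hurwitz orbit when they are related by a finite sequence of
Hurwitz moves and their inverses. -/
def SameHurwitzOrbit {G : Type*} [Group G] {m : ℕ} (t t' : Fin m → G) : Prop :=
  Relation.EqvGen HurwitzMove t t'


set_option linter.unusedSectionVars false
set_option linter.unusedVariables false

lemma orthogonal_map_aux (f : V ≃ₗᵢ[ℝ] V) (K : Submodule ℝ V) :
    (K.map (f.toLinearEquiv : V →ₗ[ℝ] V))ᗮ = Kᗮ.map (f.toLinearEquiv : V →ₗ[ℝ] V) := by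
  ext x
  simp only [Submodule.mem_orthogonal, Submodule.mem_map]
  constructor
  · intro h
    refine ⟨f.symm x, fun y hy => ?_, by simp⟩
    have := h (f y) ⟨y, hy, rfl⟩
    rw [show (x : V) = f (f.symm x) by simp, f.inner_map_map] at this
    exact this
  · rintro ⟨z, hz, rfl⟩ y ⟨w, hw, rfl⟩
    simpa [f.inner_map_map] using hz w hw

lemma reflection_congr {K K' : Submodule ℝ V} [K.HasOrthogonalProjection]
    [K'.HasOrthogonalProjection] (h : K = K') : Submodule.reflection K = Submodule.reflection K' := by
  subst h; rfl

lemma isReflection_conj (u g : V ≃ₗᵢ[ℝ] V) (hg : IsReflection g) :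
    IsReflection (u⁻¹ * g * u) := by
  obtain ⟨α, hα, rfl⟩ := hg
  refine ⟨u.symm α, fun h => hα (by simpa using congrArg u h), ?_⟩
  have h1 : Submodule.span ℝ {u.symm α}
      = (Submodule.span ℝ {α}).map (u.symm.toLinearEquiv : V →ₗ[ℝ] V) := by
    rw [Submodule.map_span]; simp
  show u⁻¹ * reflAlong α * u = reflAlong (u.symm α)
  rw [reflAlong, reflAlong,
    reflection_congr (by rw [h1, orthogonal_map_aux] :
      (Submodule.span ℝ {u.symm α})ᗮ
        = (Submodule.span ℝ {α})ᗮ.map (u.symm.toLinearEquiv : V →ₗ[ℝ] V)),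
    Submodule.reflection_map]
  rfl

/-- Pull the entry at position `q + d` to position `q`, leaving positions `< q` and `> q + d`
unchanged, while preserving reflections. -/
lemma pull (W : Subgroup (V ≃ₗᵢ[ℝ] V)) (d : ℕ) :
    ∀ (q m : ℕ) (h : q + d < m) (t : Fin m → W),
      (∀ i, IsReflection ((t i : W) : V ≃ₗᵢ[ℝ] V)) →
      ∃ t' : Fin m → W,
        SameHurwitzOrbit t t' ∧
        (∀ i, IsReflection ((t' i : W) : V ≃ₗᵢ[ℝ] V)) ∧
        t' ⟨q, by omega⟩ = t ⟨q + d, h⟩ ∧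
        ∀ j : Fin m, ((j : ℕ) < q ∨ q + d < (j : ℕ)) → t' j = t j := by
  induction d with
  | zero =>
    intro q m h t ht
    exact ⟨t, Relation.EqvGen.refl t, ht, rfl, fun j _ => rfl⟩
  | succ d ih =>
    intro q m h t ht
    set i1 : Fin m := ⟨q + d, by omega⟩ with hi1
    set i2 : Fin m := ⟨q + d + 1, by omega⟩ with hi2
    set s : Fin m → W := fun j =>
      if j = i1 then t i2 else if j = i2 then (t i2)⁻¹ * t i1 * t i2 else t j with hs
    have hne : i1 ≠ i2 := by simp [hi1, hi2, Fin.ext_iff]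
    have hmove : HurwitzMove t s := by
      refine ⟨i1, by show q + d + 1 < m; omega, ?_, ?_, ?_⟩
      · show s i1 = t i2
        simp [hs]
      · show s i2 = (t i2)⁻¹ * t i1 * t i2
        simp [hs, hne.symm]
      · intro j hj1 hj2
        have hj2' : j ≠ i2 := fun hj => hj2 (by rw [hj])
        show s j = t j
        simp only [hs]
        rw [if_neg hj1, if_neg hj2']
    have hsrefl : ∀ i, IsReflection ((s i : W) : V ≃ₗᵢ[ℝ] V) := by
      intro j
      by_cases h1 : j = i1
      · have : s j = t i2 := by simp [hs, h1]
        rw [this]; exact ht i2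
      by_cases h2 : j = i2
      · have : s j = (t i2)⁻¹ * t i1 * t i2 := by
          simp [hs, h2, hne.symm]
        rw [this]
        push_cast
        exact isReflection_conj _ _ (ht i1)
      · have : s j = t j := by simp only [hs]; rw [if_neg h1, if_neg h2]
        rw [this]; exact ht j
    obtain ⟨t', horb, hrefl, hq, hrest⟩ := ih q m (by omega) s hsrefl
    refine ⟨t', Relation.EqvGen.trans _ _ _ (Relation.EqvGen.rel _ _ hmove) horb,
      hrefl, ?_, ?_⟩
    · rw [hq]
      show s i1 = t ⟨q + (d + 1), h⟩
      have : s i1 = t i2 := by simp [hs]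
      rw [this]
      congr 1
    · intro j hj
      rw [hrest j (by omega)]
      have h1 : j ≠ i1 := by rw [hi1, Fin.ne_iff_vne]; show (j : ℕ) ≠ q + d; omega
      have h2 : j ≠ i2 := by rw [hi2, Fin.ne_iff_vne]; show (j : ℕ) ≠ q + d + 1; omega
      show s j = t j
      simp only [hs]; rw [if_neg h1, if_neg h2]

lemma strictMono_val_le {k m : ℕ} (ι : Fin k → Fin m) (hι : StrictMono ι) :
    ∀ (n : ℕ) (hn : n < k), n ≤ ((ι ⟨n, hn⟩ : Fin m) : ℕ) := by
  intro n
  induction n with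
  | zero => intro hn; exact Nat.zero_le _
  | succ n ihn =>
    intro hn
    have h1 : (⟨n, by omega⟩ : Fin k) < ⟨n + 1, hn⟩ := by simp [Fin.lt_def]
    have h2 := hι h1
    rw [Fin.lt_def] at h2
    have h3 := ihn (by omega)
    omega

lemma main_lemma (W : Subgroup (V ≃ₗᵢ[ℝ] V)) :
    ∀ (k c m : ℕ) (t : Fin m → W),
      (∀ i, IsReflection ((t i : W) : V ≃ₗᵢ[ℝ] V)) →
      ∀ (ι : Fin k → Fin m), StrictMono ι →
      ∀ (hc : ∀ j : Fin k, c + (j : ℕ) ≤ ((ι j : Fin m) : ℕ)),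
      ∃ t' : Fin m → W,
        SameHurwitzOrbit t t' ∧
        (∀ i, IsReflection ((t' i : W) : V ≃ₗᵢ[ℝ] V)) ∧
        (∀ i : Fin m, (i : ℕ) < c → t' i = t i) ∧
        ∀ j : Fin k, t' ⟨c + (j : ℕ), by have := hc j; have := (ι j).isLt; omega⟩ = t (ι j) := by
  intro k
  induction k with
  | zero =>
    intro c m t ht ι hι hc
    exact ⟨t, Relation.EqvGen.refl t, ht, fun _ _ => rfl, fun j => j.elim0⟩
  | succ k ih =>
    intro c m t ht ι hι hc
    have hc0 : c ≤ ((ι 0 : Fin m) : ℕ) := by simpa using hc 0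
    have hι0 : ((ι 0 : Fin m) : ℕ) < m := (ι 0).isLt
    obtain ⟨t₁, ho1, hr1, hq1, hrest1⟩ :=
      pull W (((ι 0 : Fin m) : ℕ) - c) c m (by omega) t ht
    have hfix : (⟨c + (((ι 0 : Fin m) : ℕ) - c), by omega⟩ : Fin m) = ι 0 :=
      Fin.ext (by simp; omega)
    rw [hfix] at hq1
    have hι' : StrictMono fun j : Fin k => ι j.succ := by
      intro a b hab
      exact hι (Fin.succ_lt_succ_iff.mpr hab)
    have hc' : ∀ j : Fin k, (c + 1) + (j : ℕ) ≤ ((ι j.succ : Fin m) : ℕ) := by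
      intro j
      have := hc j.succ
      simp only [Fin.val_succ] at this
      omega
    obtain ⟨t₂, ho2, hr2, hlow2, hpos2⟩ := ih (c + 1) m t₁ hr1 (fun j => ι j.succ) hι' hc'
    refine ⟨t₂, Relation.EqvGen.trans _ _ _ ho1 ho2, hr2, ?_, ?_⟩
    · intro i hi
      rw [hlow2 i (by omega), hrest1 i (Or.inl hi)]
    · intro j
      induction j using Fin.cases with
      | zero =>
        show t₂ ⟨c + ((0 : Fin (k + 1)) : ℕ), _⟩ = t (ι 0)
        have he : (⟨c + ((0 : Fin (k + 1)) : ℕ), by simp only [Fin.val_zero]; omega⟩ : Fin m)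
            = ⟨c, by omega⟩ := Fin.ext (by simp)
        rw [he, hlow2 ⟨c, by omega⟩ (by simp), hq1]
      | succ i =>
        have hlt : (c + 1) + (i : ℕ) < m := by have := hc' i; have := (ι i.succ).isLt; omega
        have he : (⟨c + ((i.succ : Fin (k + 1)) : ℕ), by have := hc i.succ; have := (ι i.succ).isLt; omega⟩ : Fin m)
            = ⟨(c + 1) + (i : ℕ), hlt⟩ := Fin.ext (by simp [Fin.val_succ]; omega)
        rw [he, hpos2 i, hrest1 (ι i.succ)]
        right
        have : ι 0 < ι i.succ := hι (Fin.succ_pos i)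
        rw [Fin.lt_def] at this
        omega


/-- Every subsequence of a reflection tuple occurs as a prefix of some tuple in its Hurwitz
orbit. -/
theorem stmt4 (W : Subgroup (V ≃ₗᵢ[ℝ] V)) (hW : IsReflectionGroup W)
    (m : ℕ) (t : Fin m → W)
    (ht : ∀ i, IsReflection ((t i : W) : V ≃ₗᵢ[ℝ] V))
    (k : ℕ) (hkm : k ≤ m) (ι : Fin k → Fin m) (hι : StrictMono ι) :
    ∃ t' : Fin m → W,
      SameHurwitzOrbit t t' ∧
      (∀ i, IsReflection ((t' i : W) : V ≃ₗᵢ[ℝ] V)) ∧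
      ∀ j : Fin k, t' (Fin.castLE hkm j) = t (ι j) := by
  
  have hc : ∀ j : Fin k, 0 + (j : ℕ) ≤ ((ι j : Fin m) : ℕ) := by
    intro j
    have := strictMono_val_le ι hι (j : ℕ) j.isLt
    simp only [Fin.eta] at this
    omega
  obtain ⟨t', ho, hr, _, hpre⟩ := main_lemma W k 0 m t ht ι hι hc
  refine ⟨t', ho, hr, fun j => ?_⟩
  have he : Fin.castLE hkm j
      = (⟨0 + (j : ℕ), by have := hc j; have := (ι j).isLt; omega⟩ : Fin m) :=
    Fin.ext (by simp)
  rw [he, hpre j]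
end

section
/- Let V be a real inner product space and let α_1, α_2, α_3 ∈ V form a circuit, with dependence c_1α_1 + c_2α_2 + c_3α_3 = 0 where all c_i are nonzero. Then for each i ∈ {1,2,3}, at most one of the two inner products ⟨c_iα_i, c_jα_j⟩ with j ≠ i is positive; consequently every vertex of the acuteness graph Γ_C has degree at most one, and Γ_C is disconnected. -/
open scoped RealInnerProductSpace

/-- A circuit: a finite linearly dependent set of vectors, every proper subset of which is
linearly independent. -/
def IsCircuit {V' : Type*} [AddCommGroup V'] [Module ℝ V'] (C : Set V') : Prop :=
  C.Finite ∧ ¬ LinearIndependent ℝ (fun x : C => (x : V')) ∧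
    ∀ D : Set V', D ⊂ C → LinearIndependent ℝ (fun x : D => (x : V'))

private lemma key_aux {V : Type*} [NormedAddCommGroup V] [InnerProductSpace ℝ V]
    (a b d : V) (ha : a ≠ 0) (h : a + b + d = 0)
    (h1 : 0 < ⟪a, b⟫) (h2 : 0 < ⟪a, d⟫) : False := by
  have hbd : b + d = -a := by
    have h' : a + (b + d) = 0 := by rw [← h]; abel
    exact eq_neg_of_add_eq_zero_right h'
  have hsum : ⟪a, b⟫ + ⟪a, d⟫ = -(‖a‖ ^ 2) := by
    rw [← inner_add_right, hbd, inner_neg_right, real_inner_self_eq_norm_sq]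
  have hna : 0 < ‖a‖ := norm_pos_iff.mpr ha
  nlinarith

/-- For a circuit of three vectors in a real inner product space with dependence
`c₁α₁ + c₂α₂ + c₃α₃ = 0`, each vertex of the acuteness graph has degree at most one, and the
acuteness graph is disconnected. -/
theorem stmt5 {V : Type*} [NormedAddCommGroup V] [InnerProductSpace ℝ V]
    (α : Fin 3 → V) (c : Fin 3 → ℝ)
    (hinj : Function.Injective α)
    (hC : IsCircuit (Set.range α))
    (hc : ∀ i, c i ≠ 0)
    (hdep : ∑ i, c i • α i = 0) :
    (∀ i j k : Fin 3, j ≠ i → k ≠ i → j ≠ k →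
      ¬ (0 < ⟪c i • α i, c j • α j⟫ ∧ 0 < ⟪c i • α i, c k • α k⟫)) ∧
    (∀ i j k : Fin 3,
      (SimpleGraph.fromRel fun a b : Fin 3 => 0 < ⟪c a • α a, c b • α b⟫).Adj i j →
      (SimpleGraph.fromRel fun a b : Fin 3 => 0 < ⟪c a • α a, c b • α b⟫).Adj i k → j = k) ∧
    ¬ (SimpleGraph.fromRel fun a b : Fin 3 => 0 < ⟪c a • α a, c b • α b⟫).Connected := by
  -- each α i is nonzero
  have hαne : ∀ i, α i ≠ 0 := by
    intro i
    have hne : α (i + 1) ≠ α i := fun h => by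
      have := hinj h
      revert this
      fin_cases i <;> decide
    have hss : ({α i} : Set V) ⊂ Set.range α := by
      constructor
      · intro x hx
        rcases hx with rfl
        exact ⟨i, rfl⟩
      · intro hsub
        have : α (i + 1) ∈ ({α i} : Set V) := hsub ⟨i + 1, rfl⟩
        exact hne this
    have hli := hC.2.2 _ hss
    exact hli.ne_zero ⟨α i, rfl⟩
  have hβne : ∀ i, c i • α i ≠ 0 := fun i =>
    smul_ne_zero (hc i) (hαne i)
  -- Part 1
  have part1 : ∀ i j k : Fin 3, j ≠ i → k ≠ i → j ≠ k →
      ¬ (0 < ⟪c i • α i, c j • α j⟫ ∧ 0 < ⟪c i • α i, c k • α k⟫) := by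
    intro i j k hji hki hjk ⟨h1, h2⟩
    have hsum : c i • α i + c j • α j + c k • α k = 0 := by
      rw [← hdep]
      fin_cases i <;> fin_cases j <;> fin_cases k <;>
        first
          | exact absurd rfl hji
          | exact absurd rfl hki
          | exact absurd rfl hjk
          | (rw [Fin.sum_univ_three]; simp only [Fin.isValue, Fin.zero_eta, Fin.mk_one, Fin.reduceFinMk] <;> abel)
    exact key_aux _ _ _ (hβne i) hsum h1 h2
  refine ⟨part1, ?_, ?_⟩
  · -- degree at most one
    intro i j k hij hik
    by_contra hjk
    have hRij : 0 < ⟪c i • α i, c j • α j⟫ := by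
      rcases hij.2 with h | h
      · exact h
      · rwa [real_inner_comm] at h
    have hRik : 0 < ⟪c i • α i, c k • α k⟫ := by
      rcases hik.2 with h | h
      · exact h
      · rwa [real_inner_comm] at h
    exact part1 i j k (Ne.symm hij.1) (Ne.symm hik.1) hjk ⟨hRij, hRik⟩
  · -- disconnected
    intro hcon
    set G := SimpleGraph.fromRel fun a b : Fin 3 => 0 < ⟪c a • α a, c b • α b⟫ with hG
    have deg : ∀ i j k : Fin 3, G.Adj i j → G.Adj i k → j = k := by
      intro i j k hij hik
      by_contra hjk
      have hRij : 0 < ⟪c i • α i, c j • α j⟫ := by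
        rcases hij.2 with h | h
        · exact h
        · rwa [real_inner_comm] at h
      have hRik : 0 < ⟪c i • α i, c k • α k⟫ := by
        rcases hik.2 with h | h
        · exact h
        · rwa [real_inner_comm] at h
      exact part1 i j k (Ne.symm hij.1) (Ne.symm hik.1) hjk ⟨hRij, hRik⟩
    have nb : ∀ v w : Fin 3, G.Reachable v w → v ≠ w → ∃ u, G.Adj v u := by
      intro v w hr hne
      obtain ⟨p⟩ := hr
      cases p with
      | nil => exact absurd rfl hne
      | cons h _ => exact ⟨_, h⟩
    obtain ⟨u0, a0⟩ := nb 0 1 (hcon.preconnected 0 1) (by decide)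
    obtain ⟨u1, a1⟩ := nb 1 0 (hcon.preconnected 1 0) (by decide)
    obtain ⟨u2, a2⟩ := nb 2 0 (hcon.preconnected 2 0) (by decide)
    fin_cases u0 <;> fin_cases u1 <;> fin_cases u2 <;>
      first
        | exact a0.ne rfl
        | exact a1.ne rfl
        | exact a2.ne rfl
        | exact absurd (deg _ _ _ a0 a1.symm) (by decide)
        | exact absurd (deg _ _ _ a0 a2.symm) (by decide)
        | exact absurd (deg _ _ _ a1 a0.symm) (by decide)
        | exact absurd (deg _ _ _ a1 a2.symm) (by decide)
        | exact absurd (deg _ _ _ a2 a0.symm) (by decide)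
        | exact absurd (deg _ _ _ a2 a1.symm) (by decide)
end

section
/- Let W be a finite real reflection group with set of reflections T, and let c be a quasi-Coxeter element of W, i.e., an element admitting a tuple of reflections (t_1,…,t_ℓ) with ℓ = ℓ_T(c), t_1⋯t_ℓ = c, and ⟨t_1,…,t_ℓ⟩ = W. Then W is generated by the set of reflections t that occur as the first entry of some tuple of reflections of length ℓ_T(c) whose product is c. -/
open scoped RealInnerProductSpace

variable {V : Type*} [NormedAddCommGroup V] [InnerProductSpace ℝ V] [FiniteDimensional ℝ V]

/-- The reflection length `ℓ_T(w)`: the least `m` such that `w` is a product of `m`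
reflections of `W`. -/
noncomputable def reflLen (W : Subgroup (V ≃ₗᵢ[ℝ] V)) (w : W) : ℕ :=
  sInf {m | ∃ l : List W, l.length = m ∧
    (∀ x ∈ l, IsReflection ((x : W) : V ≃ₗᵢ[ℝ] V)) ∧ l.prod = w}

/-- A quasi-Coxeter element: an element with a shortest reflection factorization whose factors
generate all of `W`. -/
noncomputable def IsQuasiCoxeter (W : Subgroup (V ≃ₗᵢ[ℝ] V)) (c : W) : Prop :=
  ∃ t : Fin (reflLen W c) → W,
    (∀ i, IsReflection ((t i : W) : V ≃ₗᵢ[ℝ] V)) ∧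
    (List.ofFn t).prod = c ∧
    Subgroup.closure (Set.range t) = ⊤

lemma reflAlong_conj (g : V ≃ₗᵢ[ℝ] V) (α : V) :
    g * reflAlong α * g⁻¹ = reflAlong (g α) := by
  have hmap : (Submodule.span ℝ {α})ᗮ.map (g.toLinearEquiv : V →ₗ[ℝ] V)
      = (Submodule.span ℝ {g α})ᗮ := by
    ext x
    rw [Submodule.mem_map]
    constructor
    · rintro ⟨y, hy, rfl⟩
      rw [Submodule.mem_orthogonal_singleton_iff_inner_right]
      have := Submodule.mem_orthogonal_singleton_iff_inner_right.mp hy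
      simpa [LinearIsometryEquiv.inner_map_map] using this
    · intro hx
      refine ⟨g.symm x, ?_, by simp⟩
      rw [Submodule.mem_orthogonal_singleton_iff_inner_right]
      have h1 := Submodule.mem_orthogonal_singleton_iff_inner_right.mp hx
      have h2 : ⟪g α, x⟫ = ⟪α, g.symm x⟫ := by
        simpa using (LinearIsometryEquiv.inner_map_map g α (g.symm x))
      rwa [h2] at h1
  have hcongr := congrArg (fun K : Submodule ℝ V => Submodule.reflection K) hmap
  have h3 := Submodule.reflection_map (𝕜 := ℝ) g ((Submodule.span ℝ {α})ᗮ)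
  have h2 : reflAlong (g α) = g.symm.trans ((reflAlong α).trans g) := by
    unfold reflAlong
    exact hcongr.symm.trans h3
  ext x
  rw [h2]
  rfl

lemma IsReflection.conj {r : V ≃ₗᵢ[ℝ] V} (hr : IsReflection r) (g : V ≃ₗᵢ[ℝ] V) :
    IsReflection (g * r * g⁻¹) := by
  obtain ⟨α, h0, rfl⟩ := hr
  exact ⟨g α, by simpa using h0, reflAlong_conj g α⟩

/-- For a quasi-Coxeter element `c`, the reflections occurring as the first entry of some
shortest reflection factorization of `c` generate `W`. -/
theorem stmt16 (W : Subgroup (V ≃ₗᵢ[ℝ] V)) (hW : IsReflectionGroup W)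
    (c : W) (hc : IsQuasiCoxeter W c) :
    Subgroup.closure
      {r : W | ∃ (u : Fin (reflLen W c) → W) (h0 : 0 < reflLen W c),
        (∀ i, IsReflection ((u i : W) : V ≃ₗᵢ[ℝ] V)) ∧
        (List.ofFn u).prod = c ∧ u ⟨0, h0⟩ = r} = ⊤ := by
  obtain ⟨t, ht, htprod, htgen⟩ := hc
  set S := {r : W | ∃ (u : Fin (reflLen W c) → W) (h0 : 0 < reflLen W c),
        (∀ i, IsReflection ((u i : W) : V ≃ₗᵢ[ℝ] V)) ∧
        (List.ofFn u).prod = c ∧ u ⟨0, h0⟩ = r} with hS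
  set l := List.ofFn t with hl
  have hlen : l.length = reflLen W c := by simp [hl]
  have hmem : ∀ x ∈ l, IsReflection ((x : W) : V ≃ₗᵢ[ℝ] V) := by
    intro x hx
    obtain ⟨i, rfl⟩ := (List.mem_ofFn (f := t) (a := x)).mp hx
    exact ht i
  -- prefix products lie in the closure of S
  have hpref : ∀ i : ℕ, i ≤ reflLen W c → (l.take i).prod ∈ Subgroup.closure S := by
    intro i
    induction i with
    | zero =>
      intro _
      simp only [List.take_zero, List.prod_nil]
      exact Subgroup.one_mem _
    | succ i ih =>
      intro hi
      have hi' : i < l.length := by omega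
      have ihp := ih (by omega)
      set p := (l.take i).prod with hp
      set a := l[i] with ha
      -- the shifted factorization
      set L := (p * a * p⁻¹) :: (l.take i ++ l.drop (i + 1)) with hL
      have hLlen : L.length = reflLen W c := by
        simp only [hL, List.length_cons, List.length_append, List.length_take,
          List.length_drop]
        omega
      have hLu : List.ofFn (fun j : Fin (reflLen W c) => L.get (Fin.cast hLlen.symm j)) = L := by
        apply List.ext_getElem
        · simp [hLlen]
        · intro n h1 h2
          simp [List.getElem_ofFn]
      have hsplit : (l.take (i + 1)).prod * (l.drop (i + 1)).prod = c := by
        rw [← List.prod_append, List.take_append_drop, hl, htprod]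
      have htk : (l.take (i + 1)).prod = p * a := List.prod_take_succ l i hi'
      have hsmem : (p * a * p⁻¹) ∈ S := by
        refine ⟨fun j : Fin (reflLen W c) => L.get (Fin.cast hLlen.symm j),
          by omega, ?_, ?_, ?_⟩
        · intro j
          dsimp only
          have hmemL : L.get (Fin.cast hLlen.symm j) ∈ L := by
            rw [List.get_eq_getElem]
            exact List.getElem_mem _
          rcases List.mem_cons.mp hmemL with h | h
          · rw [h]
            have hc2 : ((p * a * p⁻¹ : W) : V ≃ₗᵢ[ℝ] V)
                = (p : V ≃ₗᵢ[ℝ] V) * (a : V ≃ₗᵢ[ℝ] V) * (p : V ≃ₗᵢ[ℝ] V)⁻¹ := by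
              push_cast
              rfl
            rw [hc2]
            exact (hmem a (List.getElem_mem hi')).conj _
          · rcases List.mem_append.mp h with h' | h'
            · exact hmem _ (List.mem_of_mem_take h')
            · exact hmem _ (List.mem_of_mem_drop h')
        · rw [hLu]
          calc L.prod = (p * a * p⁻¹) * (p * (l.drop (i + 1)).prod) := by
                simp [hL, List.prod_cons, List.prod_append, hp]
            _ = (p * a) * (l.drop (i + 1)).prod := by group
            _ = c := by rw [← htk]; exact hsplit
        · simp [hL]
      have h1 : (l.take (i + 1)).prod = (p * a * p⁻¹) * p := by
        rw [htk]; group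
      rw [h1]
      exact Subgroup.mul_mem _ (Subgroup.subset_closure hsmem) ihp
  -- each t i lies in the closure of S
  have htin : ∀ i : Fin (reflLen W c), t i ∈ Subgroup.closure S := by
    intro i
    have hi' : (i : ℕ) < l.length := by rw [hlen]; exact i.2
    have h1 : t i = (l.take i).prod⁻¹ * (l.take ((i : ℕ) + 1)).prod := by
      rw [List.prod_take_succ l i hi']
      have hgi : l[(i : ℕ)] = t i := by
        simp [hl, List.getElem_ofFn]
      rw [hgi]
      group
    rw [h1]
    exact Subgroup.mul_mem _ (Subgroup.inv_mem _ (hpref i (le_of_lt i.2)))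
      (hpref ((i : ℕ) + 1) i.2)
  rw [eq_top_iff, ← htgen, Subgroup.closure_le]
  rintro x ⟨i, rfl⟩
  exact htin i
end

section
/- Let W be a finite real reflection group in which all reflections are W-conjugate. Let (t_1,…,t_m) with m ≥ 1 be a tuple of reflections such that the subgroup W′ = ⟨t_1,…,t_m⟩ is a proper subgroup of W, and let t be a reflection of W not in W′. Then the two tuples (t_1,…,t_m, t, t) and (t_1,…,t_m, t_1, t_1) are reflection factorizations of the same element w = t_1⋯t_m of length m + 2 with the same multiset of W-conjugacy classes of factors, but they do not lie in the same Hurwitz orbit. -/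
open scoped RealInnerProductSpace

variable {V : Type*} [NormedAddCommGroup V] [InnerProductSpace ℝ V] [FiniteDimensional ℝ V]

lemma isReflection_mul_self {g : V ≃ₗᵢ[ℝ] V} (h : IsReflection g) : g * g = 1 := by
  obtain ⟨α, -, rfl⟩ := h
  ext x
  simp [reflAlong, LinearIsometryEquiv.coe_mul]

lemma closure_range_eq_of_hurwitzMove {G : Type*} [Group G] {m : ℕ} {t t' : Fin m → G}
    (h : HurwitzMove t t') :
    Subgroup.closure (Set.range t') = Subgroup.closure (Set.range t) := by
  obtain ⟨i, hlt, h1, h2, h3⟩ := h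
  have hti : t i = t' i * t' ⟨(i : ℕ) + 1, hlt⟩ * (t' i)⁻¹ := by
    rw [h1, h2]; group
  apply le_antisymm <;> rw [Subgroup.closure_le] <;> rintro x ⟨j, rfl⟩
  · by_cases hj1 : j = i
    · subst hj1; rw [h1]
      exact Subgroup.subset_closure (Set.mem_range_self _)
    by_cases hj2 : j = ⟨(i : ℕ) + 1, hlt⟩
    · subst hj2; rw [h2]
      exact mul_mem (mul_mem (inv_mem (Subgroup.subset_closure (Set.mem_range_self _)))
        (Subgroup.subset_closure (Set.mem_range_self _)))
        (Subgroup.subset_closure (Set.mem_range_self _))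
    · rw [h3 j hj1 hj2]
      exact Subgroup.subset_closure (Set.mem_range_self _)
  · by_cases hj1 : j = i
    · subst hj1; rw [hti]
      exact mul_mem (mul_mem (Subgroup.subset_closure (Set.mem_range_self _))
        (Subgroup.subset_closure (Set.mem_range_self _)))
        (inv_mem (Subgroup.subset_closure (Set.mem_range_self _)))
    by_cases hj2 : j = ⟨(i : ℕ) + 1, hlt⟩
    · subst hj2; rw [← h1]
      exact Subgroup.subset_closure (Set.mem_range_self _)
    · rw [← h3 j hj1 hj2]
      exact Subgroup.subset_closure (Set.mem_range_self _)

lemma closure_range_eq_of_sameHurwitzOrbit {G : Type*} [Group G] {m : ℕ} {t t' : Fin m → G}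
    (h : SameHurwitzOrbit t t') :
    Subgroup.closure (Set.range t) = Subgroup.closure (Set.range t') := by
  induction h with
  | rel a b hab => exact (closure_range_eq_of_hurwitzMove hab).symm
  | refl a => rfl
  | symm a b _ ih => exact ih.symm
  | trans a b c _ _ ih1 ih2 => exact ih1.trans ih2

/-- In a finite real reflection group whose reflections are all conjugate, if the factors of a
reflection factorization generate a proper subgroup `W'` and `r` is a reflection outside `W'`,
then appending `(r, r)` or appending `(t₁, t₁)` gives two factorizations of the same element
with the same multiset of conjugacy classes lying in different Hurwitz orbits. -/
theorem stmt19 (W : Subgroup (V ≃ₗᵢ[ℝ] V)) (hW : IsReflectionGroup W)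
    (hconj : ∀ a b : W, IsReflection ((a : W) : V ≃ₗᵢ[ℝ] V) →
      IsReflection ((b : W) : V ≃ₗᵢ[ℝ] V) → IsConj a b)
    (m : ℕ) (hm : 0 < m) (t : Fin m → W)
    (ht : ∀ i, IsReflection ((t i : W) : V ≃ₗᵢ[ℝ] V))
    (hproper : Subgroup.closure (Set.range t) ≠ (⊤ : Subgroup W))
    (r : W) (hr : IsReflection ((r : W) : V ≃ₗᵢ[ℝ] V))
    (hrout : r ∉ Subgroup.closure (Set.range t)) :
    (List.ofFn (Fin.append t ![r, r])).prod = (List.ofFn t).prod ∧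
    (List.ofFn (Fin.append t ![t ⟨0, hm⟩, t ⟨0, hm⟩])).prod = (List.ofFn t).prod ∧
    Multiset.map (fun i => ConjClasses.mk (Fin.append t ![r, r] i)) Finset.univ.val =
      Multiset.map (fun i => ConjClasses.mk (Fin.append t ![t ⟨0, hm⟩, t ⟨0, hm⟩] i))
        Finset.univ.val ∧
    ¬ SameHurwitzOrbit (Fin.append t ![r, r]) (Fin.append t ![t ⟨0, hm⟩, t ⟨0, hm⟩]) := by
  have hrr : r * r = 1 := by
    ext1; push_cast [Subgroup.coe_mul]
    exact isReflection_mul_self hr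
  have ht00 : t ⟨0, hm⟩ * t ⟨0, hm⟩ = 1 := by
    ext1; push_cast [Subgroup.coe_mul]
    exact isReflection_mul_self (ht _)
  have hprod : ∀ s : W, s * s = 1 →
      (List.ofFn (Fin.append t ![s, s])).prod = (List.ofFn t).prod := by
    intro s hs
    rw [List.ofFn_add, List.prod_append]
    have h1 : (List.ofFn fun i : Fin m => Fin.append t ![s, s] (Fin.castAdd 2 i)) =
        List.ofFn t := by
      congr 1; funext i; rw [Fin.append_left]
    have h2 : (List.ofFn fun j : Fin 2 => Fin.append t ![s, s] (Fin.natAdd m j)).prod = 1 := by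
      have : (List.ofFn fun j : Fin 2 => Fin.append t ![s, s] (Fin.natAdd m j)) = [s, s] := by
        simp [List.ofFn_succ, Fin.append_right]
      rw [this]; simpa using hs
    rw [show (List.ofFn fun i => Fin.append t ![s, s] (Fin.castLE (by omega) i)) = List.ofFn t from h1, h2, mul_one]
  have hrefl : ∀ j : Fin (m + 2), IsReflection ((Fin.append t ![r, r] j : W) : V ≃ₗᵢ[ℝ] V) := by
    intro j
    induction j using Fin.addCases with
    | left j => rw [Fin.append_left]; exact ht j
    | right j =>
      rw [Fin.append_right]
      fin_cases j <;> simpa using hr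
  have hrefl' : ∀ j : Fin (m + 2),
      IsReflection ((Fin.append t ![t ⟨0, hm⟩, t ⟨0, hm⟩] j : W) : V ≃ₗᵢ[ℝ] V) := by
    intro j
    induction j using Fin.addCases with
    | left j => rw [Fin.append_left]; exact ht j
    | right j =>
      rw [Fin.append_right]
      fin_cases j <;> simpa using ht ⟨0, hm⟩
  refine ⟨hprod r hrr, hprod _ ht00, ?_, ?_⟩
  · congr 1; funext j
    rw [ConjClasses.mk_eq_mk_iff_isConj]
    exact hconj _ _ (hrefl j) (hrefl' j)
  · intro horb
    have hclos := closure_range_eq_of_sameHurwitzOrbit horb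
    have hsub : Subgroup.closure (Set.range (Fin.append t ![t ⟨0, hm⟩, t ⟨0, hm⟩])) ≤
        Subgroup.closure (Set.range t) := by
      rw [Subgroup.closure_le]
      rintro x ⟨j, rfl⟩
      induction j using Fin.addCases with
      | left j =>
        rw [Fin.append_left]; exact Subgroup.subset_closure (Set.mem_range_self _)
      | right j =>
        rw [Fin.append_right]
        fin_cases j <;> simpa using Subgroup.subset_closure (Set.mem_range_self (⟨0, hm⟩ : Fin m))
    have hrmem : r ∈ Subgroup.closure (Set.range (Fin.append t ![r, r])) := by
      apply Subgroup.subset_closure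
      refine ⟨Fin.natAdd m 0, ?_⟩
      rw [Fin.append_right]; rfl
    exact hrout (hsub (hclos ▸ hrmem))
end
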